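/- arXiv:1809.09547 — 4 statements merged into one kernel-verified Lean document; each statement's English description precedes it below -/
import Mathlib

section
/- For nonnegative iid real random variables S_1,...,S_{kr} with k, r positive integers and p > 0, the (pk)-th inverse moment of the average of kr samples satisfies E[((1/(kr)) Σ_{i=1}^{kr} S_i)^{-pk}] ≤ (E[((1/r) Σ_{i=1}^{r} S_i)^{-p}])^k. -/
open MeasureTheory ProbabilityTheory

section Aux

variable {Ω : Type*} [MeasurableSpace Ω] {μ : Measure Ω}

private lemma aux_measurable_phi (q : ℝ) : Measurable (fun x : ℝ => x ^ q) := by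
  measurability

/-- If `X ⊥ Y`, `X' ⊥ Y'`, `X ~ X'`, `Y ~ Y'`, then `X + Y ~ X' + Y'`. -/
private lemma aux_identDistrib_add [IsProbabilityMeasure μ]
    {X Y X' Y' : Ω → ℝ}
    (hX : AEMeasurable X μ) (hY : AEMeasurable Y μ)
    (hX' : AEMeasurable X' μ) (hY' : AEMeasurable Y' μ)
    (h1 : IndepFun X Y μ) (h2 : IndepFun X' Y' μ)
    (hXX : IdentDistrib X X' μ μ) (hYY : IdentDistrib Y Y' μ μ) :
    IdentDistrib (fun ω => X ω + Y ω) (fun ω => X' ω + Y' ω) μ μ := by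
  have hpair : IdentDistrib (fun ω => (X ω, Y ω)) (fun ω => (X' ω, Y' ω)) μ μ := by
    refine ⟨hX.prodMk hY, hX'.prodMk hY', ?_⟩
    rw [(indepFun_iff_map_prod_eq_prod_map_map hX hY).1 h1,
        (indepFun_iff_map_prod_eq_prod_map_map hX' hY').1 h2, hXX.map_eq, hYY.map_eq]
  exact hpair.comp measurable_add

/-- Sums of `m` consecutive iid variables starting at `c` have the same distribution as
sums of the first `m` variables. -/
private lemma aux_identDistrib_sum_shift [IsProbabilityMeasure μ]
    {S : ℕ → Ω → ℝ} (hmeas : ∀ i, Measurable (S i))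
    (hindep : iIndepFun S μ)
    (hid : ∀ i j, IdentDistrib (S i) (S j) μ μ) (c m : ℕ) :
    IdentDistrib (fun ω => ∑ i ∈ Finset.range m, S (c + i) ω)
      (fun ω => ∑ i ∈ Finset.range m, S i ω) μ μ := by
  induction m with
  | zero =>
    simp only [Finset.range_zero, Finset.sum_empty]
    exact IdentDistrib.refl aemeasurable_const
  | succ m ih =>
    have hmsum : ∀ (d n : ℕ), Measurable (fun ω => ∑ i ∈ Finset.range n, S (d + i) ω) :=
      fun d n => Finset.measurable_sum _ (fun i _ => hmeas (d + i))
    have h1 : IndepFun (fun ω => ∑ i ∈ Finset.range m, S (c + i) ω) (S (c + m)) μ := by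
      have hemb : Function.Injective (fun i => c + i) := fun a b h => by simpa using h
      have hnm : c + m ∉ (Finset.range m).map ⟨fun i => c + i, hemb⟩ := by
        simp only [Finset.mem_map, Finset.mem_range, Function.Embedding.coeFn_mk]
        rintro ⟨a, ha, hac⟩; omega
      have := hindep.indepFun_finsetSum_of_notMem hmeas hnm
      have heq : (∑ j ∈ (Finset.range m).map ⟨fun i => c + i, hemb⟩, S j)
          = (fun ω => ∑ i ∈ Finset.range m, S (c + i) ω) := by
        funext ω
        rw [Finset.sum_apply]
        rw [Finset.sum_map]
        rfl
      rwa [heq] at this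
    have h2 : IndepFun (fun ω => ∑ i ∈ Finset.range m, S i ω) (S m) μ := by
      have := hindep.indepFun_sum_range_succ hmeas m
      have heq : (∑ j ∈ Finset.range m, S j) = (fun ω => ∑ i ∈ Finset.range m, S i ω) := by
        funext ω; rw [Finset.sum_apply]
      rwa [heq] at this
    simp_rw [Finset.sum_range_succ]
    exact aux_identDistrib_add (hmsum c m).aemeasurable (hmeas (c + m)).aemeasurable
      ((hmsum 0 m).aemeasurable.congr (by simp)) (hmeas m).aemeasurable
      h1 h2 ih (hid (c + m) m)

private lemma aux_lt_mul {c m i r : ℕ} (hc : c < m) (hi : i < r) : c * r + i < m * r := by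
  calc c * r + i < c * r + r := by omega
    _ = (c + 1) * r := by ring
    _ ≤ m * r := Nat.mul_le_mul_right r (by omega)

end Aux

/-- For nonnegative iid real random variables `S 1, ..., S (k*r)`,
the `p*k`-th inverse moment of the average of `k*r` samples is bounded by the
`k`-th power of the `p`-th inverse moment of the average of `r` samples. -/
theorem inverse_moment_batch_bound
    {Ω : Type*} [MeasurableSpace Ω] (μ : Measure Ω) [IsProbabilityMeasure μ]
    (S : ℕ → Ω → ℝ) (hmeas : ∀ i, Measurable (S i))
    (hpos : ∀ i ω, 0 < S i ω)
    (hindep : iIndepFun S μ)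
    (hid : ∀ i j, IdentDistrib (S i) (S j) μ μ)
    (p : ℝ) (hp : 0 < p) (k r : ℕ) (hk : 0 < k) (hr : 0 < r)
    (hint1 : Integrable
      (fun ω => (((k * r : ℕ) : ℝ)⁻¹ * ∑ i ∈ Finset.range (k * r), S i ω) ^ (-(p * (k : ℝ)))) μ)
    (hint2 : Integrable
      (fun ω => ((r : ℝ)⁻¹ * ∑ i ∈ Finset.range r, S i ω) ^ (-p)) μ) :
    ∫ ω, (((k * r : ℕ) : ℝ)⁻¹ * ∑ i ∈ Finset.range (k * r), S i ω) ^ (-(p * (k : ℝ))) ∂μ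
      ≤ (∫ ω, ((r : ℝ)⁻¹ * ∑ i ∈ Finset.range r, S i ω) ^ (-p) ∂μ) ^ k := by
  classical
  -- block sums and block statistics
  set T : ℕ → Ω → ℝ := fun c ω => ∑ i ∈ Finset.range r, S (c * r + i) ω with hT
  set g : ℕ → Ω → ℝ := fun c ω => ((r : ℝ)⁻¹ * T c ω) ^ (-p) with hg
  have hmT : ∀ c, Measurable (T c) := fun c =>
    Finset.measurable_sum _ (fun i _ => hmeas (c * r + i))
  have hmg : ∀ c, Measurable (g c) := fun c =>
    (aux_measurable_phi (-p)).comp (measurable_const.mul (hmT c))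
  have hTpos : ∀ c ω, 0 < T c ω := fun c ω =>
    Finset.sum_pos (fun i _ => hpos _ ω) (Finset.nonempty_range_iff.mpr hr.ne')
  -- identical distribution of block statistics
  have hgid : ∀ c, IdentDistrib (g c)
      (fun ω => ((r : ℝ)⁻¹ * ∑ i ∈ Finset.range r, S i ω) ^ (-p)) μ μ := by
    intro c
    have h1 : IdentDistrib (T c) (fun ω => ∑ i ∈ Finset.range r, S i ω) μ μ :=
      aux_identDistrib_sum_shift hmeas hindep hid (c * r) r
    have h2 := h1.comp (u := fun x => ((r : ℝ)⁻¹ * x) ^ (-p))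
      ((aux_measurable_phi (-p)).comp (measurable_const.mul measurable_id))
    exact h2
  have hgint : ∀ c, Integrable (g c) μ := fun c => (hgid c).integrable_iff.2 hint2
  have hgeq : ∀ c, ∫ ω, g c ω ∂μ
      = ∫ ω, ((r : ℝ)⁻¹ * ∑ i ∈ Finset.range r, S i ω) ^ (-p) ∂μ :=
    fun c => (hgid c).integral_eq
  -- regrouping of the global sum
  have hsum : ∀ (n : ℕ) (ω : Ω),
      ∑ i ∈ Finset.range (n * r), S i ω = ∑ c ∈ Finset.range n, T c ω := by
    intro n ω
    induction n with
    | zero => simp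
    | succ n ih =>
      have : (n + 1) * r = n * r + r := by ring
      rw [this, Finset.sum_range_add, ih, Finset.sum_range_succ]
  -- pointwise AM-GM bound
  have hpt : ∀ ω, (((k * r : ℕ) : ℝ)⁻¹ * ∑ i ∈ Finset.range (k * r), S i ω) ^ (-(p * (k : ℝ)))
      ≤ ∏ c ∈ Finset.range k, g c ω := by
    intro ω
    set b : ℕ → ℝ := fun c => (r : ℝ)⁻¹ * T c ω with hb
    have hbpos : ∀ c, 0 < b c := fun c =>
      mul_pos (by positivity) (hTpos c ω)
    have hkR : (0:ℝ) < (k : ℝ) := by exact_mod_cast hk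
    have hAM : (((k * r : ℕ) : ℝ)⁻¹ * ∑ i ∈ Finset.range (k * r), S i ω)
        = (k : ℝ)⁻¹ * ∑ c ∈ Finset.range k, b c := by
      rw [hsum k ω]
      push_cast
      rw [Finset.mul_sum, Finset.mul_sum]
      refine Finset.sum_congr rfl fun c _ => ?_
      simp only [hb]
      rw [mul_inv]; ring
    have hprodpos : 0 < ∏ c ∈ Finset.range k, b c :=
      Finset.prod_pos fun c _ => hbpos c
    have hGM : (∏ c ∈ Finset.range k, b c) ^ ((k:ℝ)⁻¹)
        ≤ (k : ℝ)⁻¹ * ∑ c ∈ Finset.range k, b c := by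
      have := Real.geom_mean_le_arith_mean_weighted (Finset.range k)
        (fun _ => (k:ℝ)⁻¹) b (fun _ _ => by positivity)
        (by simp [Finset.sum_const, Finset.card_range];
            field_simp)
        (fun c _ => (hbpos c).le)
      rw [Real.finset_prod_rpow _ _ (fun c _ => (hbpos c).le)] at this
      calc (∏ c ∈ Finset.range k, b c) ^ ((k:ℝ)⁻¹)
          ≤ ∑ c ∈ Finset.range k, (k:ℝ)⁻¹ * b c := this
        _ = (k : ℝ)⁻¹ * ∑ c ∈ Finset.range k, b c := by rw [Finset.mul_sum]
    have hx : (0:ℝ) < (∏ c ∈ Finset.range k, b c) ^ ((k:ℝ)⁻¹) :=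
      Real.rpow_pos_of_pos hprodpos _
    have hmono := Real.rpow_le_rpow_of_nonpos hx hGM
      (by nlinarith : -(p * (k : ℝ)) ≤ 0)
    rw [hAM]
    refine hmono.trans_eq ?_
    rw [← Real.rpow_mul hprodpos.le]
    have hexp : (k:ℝ)⁻¹ * -(p * (k : ℝ)) = -p := by field_simp
    rw [hexp]
    rw [← Real.finset_prod_rpow _ _ (fun c _ => (hbpos c).le)]
  -- independence of the block statistics: product over first m blocks vs block m
  have hind : ∀ m, IndepFun (fun ω => ∏ c ∈ Finset.range m, g c ω) (g m) μ := by
    intro m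
    set A : Finset ℕ := Finset.range (m * r) with hA
    set B : Finset ℕ := (Finset.range r).image (fun i => m * r + i) with hB
    have hAB : Disjoint A B := by
      rw [Finset.disjoint_left]
      intro x hxA hxB
      rw [hA, Finset.mem_range] at hxA
      rw [hB, Finset.mem_image] at hxB
      obtain ⟨i, _, rfl⟩ := hxB
      omega
    have base := hindep.indepFun_finset A B hAB hmeas
    set φA : ((i : A) → ℝ) → ℝ := fun v => ∏ c ∈ (Finset.range m).attach,
      ((r : ℝ)⁻¹ * ∑ i ∈ (Finset.range r).attach,
        v ⟨c.1 * r + i.1, by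
          rw [hA, Finset.mem_range]
          exact aux_lt_mul (Finset.mem_range.1 c.2) (Finset.mem_range.1 i.2)⟩) ^ (-p)
      with hφA
    set φB : ((i : B) → ℝ) → ℝ := fun v =>
      ((r : ℝ)⁻¹ * ∑ i ∈ (Finset.range r).attach,
        v ⟨m * r + i.1, by
          rw [hB, Finset.mem_image]
          exact ⟨i.1, i.2, rfl⟩⟩) ^ (-p) with hφB
    have hmφA : Measurable φA := by
      refine Finset.measurable_prod _ fun c _ => ?_
      exact (aux_measurable_phi (-p)).comp (measurable_const.mul
        (Finset.measurable_sum _ fun i _ => measurable_pi_apply _))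
    have hmφB : Measurable φB :=
      (aux_measurable_phi (-p)).comp (measurable_const.mul
        (Finset.measurable_sum _ fun i _ => measurable_pi_apply _))
    have h1 : (fun ω => ∏ c ∈ Finset.range m, g c ω)
        = φA ∘ (fun a (i : A) => S i a) := by
      funext ω
      simp only [Function.comp, hφA]
      rw [← Finset.prod_attach (Finset.range m) (fun c => g c ω)]
      refine Finset.prod_congr rfl fun c _ => ?_
      simp only [hg, hT]
      congr 1
      congr 1
      rw [← Finset.sum_attach (Finset.range r) (fun i => S (c.1 * r + i) ω)]
    have h2 : g m = φB ∘ (fun a (i : B) => S i a) := by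
      funext ω
      simp only [Function.comp, hφB, hg, hT]
      congr 1
      congr 1
      rw [← Finset.sum_attach (Finset.range r) (fun i => S (m * r + i) ω)]
    rw [h1, h2]
    exact base.comp hmφA hmφB
  -- integral of product of first m block statistics
  have key : ∀ m, Integrable (fun ω => ∏ c ∈ Finset.range m, g c ω) μ ∧
      ∫ ω, ∏ c ∈ Finset.range m, g c ω ∂μ
        = (∫ ω, ((r : ℝ)⁻¹ * ∑ i ∈ Finset.range r, S i ω) ^ (-p) ∂μ) ^ m := by
    intro m
    induction m with
    | zero => simp
    | succ m ih =>
      have hmul : (fun ω => ∏ c ∈ Finset.range (m + 1), g c ω)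
          = (fun ω => ∏ c ∈ Finset.range m, g c ω) * (g m) := by
        funext ω
        simp [Finset.prod_range_succ]
      have hI : Integrable ((fun ω => ∏ c ∈ Finset.range m, g c ω) * (g m)) μ :=
        (hind m).integrable_mul ih.1 (hgint m)
      constructor
      · rw [hmul]; exact hI
      · rw [hmul]
        have := (hind m).integral_mul_eq_mul_integral ih.1.aestronglyMeasurable (hgint m).aestronglyMeasurable
        calc ∫ ω, ((fun ω => ∏ c ∈ Finset.range m, g c ω) * (g m)) ω ∂μ
            = (∫ ω, ∏ c ∈ Finset.range m, g c ω ∂μ) * ∫ ω, g m ω ∂μ := this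
          _ = (∫ ω, ((r : ℝ)⁻¹ * ∑ i ∈ Finset.range r, S i ω) ^ (-p) ∂μ) ^ (m + 1) := by
              rw [ih.2, hgeq m, pow_succ]
  calc ∫ ω, (((k * r : ℕ) : ℝ)⁻¹ * ∑ i ∈ Finset.range (k * r), S i ω) ^ (-(p * (k : ℝ))) ∂μ
      ≤ ∫ ω, ∏ c ∈ Finset.range k, g c ω ∂μ :=
        integral_mono hint1 (key k).1 hpt
    _ = (∫ ω, ((r : ℝ)⁻¹ * ∑ i ∈ Finset.range r, S i ω) ^ (-p) ∂μ) ^ k := (key k).2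
end

section
/- For nonnegative iid random variables S_1, S_2, ..., the p-th inverse moment of the sample average is nonincreasing in the sample size: if s ≥ r then (E[((1/s) Σ_{i=1}^{s} S_i)^{-p}])^{1/p} ≤ (E[((1/r) Σ_{i=1}^{r} S_i)^{-p}])^{1/p}, provided the right-hand side is finite. -/
open MeasureTheory ProbabilityTheory

lemma my_convexOn_rpow_neg {p : ℝ} (hp : 0 < p) :
    ConvexOn ℝ (Set.Ioi (0:ℝ)) (fun x : ℝ => x ^ (-p)) := by
  refine ⟨convex_Ioi 0, fun x hx y hy a b ha hb hab => ?_⟩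
  have hx' : (0:ℝ) < x := hx
  have hy' : (0:ℝ) < y := hy
  have hxy : (0:ℝ) < a • x + b • y := by
    rcases ha.lt_or_eq with ha' | ha'
    · have : 0 ≤ b • y := by positivity
      have : 0 < a • x := by positivity
      linarith
    · have hb' : 0 < b := by rw [← ha'] at hab; simpa using (by linarith)
      have : 0 ≤ a • x := by positivity
      have : 0 < b • y := by positivity
      linarith
  have key : ∀ z : ℝ, 0 < z → z ^ (-p) = Real.exp ((-p) * Real.log z) := by
    intro z hz
    rw [Real.rpow_def_of_pos hz]; ring_nf
  simp only [smul_eq_mul] at *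
  rw [key _ hxy, key _ hx', key _ hy']
  have hlog : a * Real.log x + b * Real.log y ≤ Real.log (a * x + b * y) := by
    have := ((strictConcaveOn_log_Ioi).concaveOn).2 hx hy ha hb hab
    simpa using this
  have h1 : (-p) * Real.log (a * x + b * y) ≤ a * ((-p) * Real.log x) + b * ((-p) * Real.log y) := by
    nlinarith
  calc Real.exp ((-p) * Real.log (a * x + b * y))
      ≤ Real.exp (a * ((-p) * Real.log x) + b * ((-p) * Real.log y)) := Real.exp_le_exp.2 h1
    _ ≤ a * Real.exp ((-p) * Real.log x) + b * Real.exp ((-p) * Real.log y) := by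
        have := convexOn_exp.2 (Set.mem_univ ((-p) * Real.log x)) (Set.mem_univ ((-p) * Real.log y)) ha hb hab
        simpa using this

lemma my_count (s r i : ℕ) (hr : 0 < r) (hi : i ∈ Finset.range s) :
    (((Finset.range s).powersetCard r).filter (fun B => i ∈ B)).card
      = Nat.choose (s-1) (r-1) := by
  classical
  have hcard : (((Finset.range s).erase i).powersetCard (r-1)).card = Nat.choose (s-1) (r-1) := by
    rw [Finset.card_powersetCard, Finset.card_erase_of_mem hi, Finset.card_range]
  rw [← hcard]
  refine Finset.card_bij' (fun B _ => B.erase i) (fun D _ => insert i D) ?_ ?_ ?_ ?_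
  · intro B hB
    simp only [Finset.mem_filter, Finset.mem_powersetCard] at hB
    obtain ⟨⟨hsub, hc⟩, hiB⟩ := hB
    refine Finset.mem_powersetCard.2 ⟨Finset.erase_subset_erase _ hsub, ?_⟩
    rw [Finset.card_erase_of_mem hiB, hc]
  · intro D hD
    simp only [Finset.mem_powersetCard] at hD
    obtain ⟨hsub, hc⟩ := hD
    have hiD : i ∉ D := fun h => (Finset.notMem_erase i _) (hsub h)
    refine Finset.mem_filter.2 ⟨Finset.mem_powersetCard.2 ⟨?_, ?_⟩, Finset.mem_insert_self i D⟩
    · intro x hx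
      rcases Finset.mem_insert.1 hx with h | h
      · exact h ▸ hi
      · exact Finset.erase_subset _ _ (hsub h)
    · rw [Finset.card_insert_of_notMem hiD, hc]
      omega
  · intro B hB
    simp only [Finset.mem_filter] at hB
    exact Finset.insert_erase hB.2
  · intro D hD
    simp only [Finset.mem_powersetCard] at hD
    have hiD : i ∉ D := fun h => (Finset.notMem_erase i _) (hD.1 h)
    exact Finset.erase_insert hiD

lemma my_double_count (f : ℕ → ℝ) (s r : ℕ) (hr : 0 < r) :
    ∑ B ∈ (Finset.range s).powersetCard r, ∑ i ∈ B, f i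
      = (Nat.choose (s-1) (r-1) : ℝ) * ∑ i ∈ Finset.range s, f i := by
  classical
  have h1 : ∀ B ∈ (Finset.range s).powersetCard r,
      ∑ i ∈ B, f i = ∑ i ∈ Finset.range s, if i ∈ B then f i else 0 := by
    intro B hB
    have hsub : B ⊆ Finset.range s := (Finset.mem_powersetCard.1 hB).1
    rw [Finset.sum_ite_mem, Finset.inter_eq_right.2 hsub]
  rw [Finset.sum_congr rfl h1, Finset.sum_comm, Finset.mul_sum]
  refine Finset.sum_congr rfl fun i hi => ?_
  rw [← Finset.sum_filter, Finset.sum_const, my_count s r i hr hi, nsmul_eq_mul]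

lemma my_identDistrib_add {Ω : Type*} [MeasurableSpace Ω] {μ : Measure Ω} [IsProbabilityMeasure μ]
    {f f' g g' : Ω → ℝ} (hf : Measurable f) (hf' : Measurable f') (hg : Measurable g)
    (hg' : Measurable g')
    (h1 : IdentDistrib f g μ μ) (h2 : IdentDistrib f' g' μ μ)
    (h3 : IndepFun f f' μ) (h4 : IndepFun g g' μ) :
    IdentDistrib (fun ω => f ω + f' ω) (fun ω => g ω + g' ω) μ μ := by
  have hmapf : μ.map (fun ω => (f ω, f' ω)) = (μ.map f).prod (μ.map f') :=
    (indepFun_iff_map_prod_eq_prod_map_map hf.aemeasurable hf'.aemeasurable).1 h3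
  have hmapg : μ.map (fun ω => (g ω, g' ω)) = (μ.map g).prod (μ.map g') :=
    (indepFun_iff_map_prod_eq_prod_map_map hg.aemeasurable hg'.aemeasurable).1 h4
  refine ⟨(hf.add hf').aemeasurable, (hg.add hg').aemeasurable, ?_⟩
  have e1 : (fun ω => f ω + f' ω) = (fun q : ℝ × ℝ => q.1 + q.2) ∘ (fun ω => (f ω, f' ω)) := rfl
  have e2 : (fun ω => g ω + g' ω) = (fun q : ℝ × ℝ => q.1 + q.2) ∘ (fun ω => (g ω, g' ω)) := rfl
  rw [e1, e2, ← Measure.map_map measurable_add (hf.prodMk hf'),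
    ← Measure.map_map measurable_add (hg.prodMk hg'), hmapf, hmapg,
    h1.map_eq, h2.map_eq]

lemma my_identDistrib_sum {Ω : Type*} [MeasurableSpace Ω] {μ : Measure Ω} [IsProbabilityMeasure μ]
    {S : ℕ → Ω → ℝ} (hmeas : ∀ i, Measurable (S i))
    (hindep : iIndepFun S μ)
    (hid : ∀ i j, IdentDistrib (S i) (S j) μ μ) :
    ∀ (n : ℕ) (B C : Finset ℕ), B.card = n → C.card = n →
      IdentDistrib (fun ω => ∑ i ∈ B, S i ω) (fun ω => ∑ i ∈ C, S i ω) μ μ := by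
  intro n
  induction n with
  | zero =>
    intro B C hB hC
    rw [Finset.card_eq_zero] at hB hC
    subst hB; subst hC
    simp only [Finset.sum_empty]
    exact IdentDistrib.refl aemeasurable_const
  | succ n ih =>
    intro B C hB hC
    obtain ⟨b, hb⟩ : B.Nonempty := Finset.card_pos.1 (by omega)
    obtain ⟨c, hc⟩ : C.Nonempty := Finset.card_pos.1 (by omega)
    have hB' : (B.erase b).card = n := by rw [Finset.card_erase_of_mem hb, hB]; omega
    have hC' : (C.erase c).card = n := by rw [Finset.card_erase_of_mem hc, hC]; omega
    have hsumB : ∀ ω, ∑ i ∈ B, S i ω = S b ω + ∑ i ∈ B.erase b, S i ω := by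
      intro ω; rw [← Finset.insert_erase hb, Finset.sum_insert (Finset.notMem_erase b B)]
      simp [Finset.insert_erase hb]
    have hsumC : ∀ ω, ∑ i ∈ C, S i ω = S c ω + ∑ i ∈ C.erase c, S i ω := by
      intro ω; rw [← Finset.insert_erase hc, Finset.sum_insert (Finset.notMem_erase c C)]
      simp [Finset.insert_erase hc]
    simp only [funext hsumB, funext hsumC]
    have hmB : Measurable (fun ω => ∑ i ∈ B.erase b, S i ω) := by
      exact Finset.measurable_sum _ fun i _ => hmeas i
    have hmC : Measurable (fun ω => ∑ i ∈ C.erase c, S i ω) := by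
      exact Finset.measurable_sum _ fun i _ => hmeas i
    have hindB : IndepFun (S b) (fun ω => ∑ i ∈ B.erase b, S i ω) μ := by
      have := (hindep.indepFun_finsetSum_of_notMem hmeas (Finset.notMem_erase b B)).symm
      have he : (∑ j ∈ B.erase b, S j) = (fun ω => ∑ i ∈ B.erase b, S i ω) := by
        ext ω; simp
      rwa [he] at this
    have hindC : IndepFun (S c) (fun ω => ∑ i ∈ C.erase c, S i ω) μ := by
      have := (hindep.indepFun_finsetSum_of_notMem hmeas (Finset.notMem_erase c C)).symm
      have he : (∑ j ∈ C.erase c, S j) = (fun ω => ∑ i ∈ C.erase c, S i ω) := by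
        ext ω; simp
      rwa [he] at this
    exact my_identDistrib_add (hmeas b) hmB (hmeas c) hmC (hid b c)
      (ih (B.erase b) (C.erase c) hB' hC') hindB hindC

/-- For positive iid random variables, the `p`-th inverse moment of the sample
average is nonincreasing in the sample size. -/
theorem inverse_moment_average_antitone
    {Ω : Type*} [MeasurableSpace Ω] (μ : Measure Ω) [IsProbabilityMeasure μ]
    (S : ℕ → Ω → ℝ) (hmeas : ∀ i, Measurable (S i))
    (hpos : ∀ i ω, 0 < S i ω)
    (hindep : iIndepFun S μ)
    (hid : ∀ i j, IdentDistrib (S i) (S j) μ μ)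
    (p : ℝ) (hp : 0 < p) (r s : ℕ) (hr : 0 < r) (hrs : r ≤ s)
    (hint : Integrable (fun ω => ((r : ℝ)⁻¹ * ∑ i ∈ Finset.range r, S i ω) ^ (-p)) μ) :
    (∫ ω, ((s : ℝ)⁻¹ * ∑ i ∈ Finset.range s, S i ω) ^ (-p) ∂μ) ^ (1 / p)
      ≤ (∫ ω, ((r : ℝ)⁻¹ * ∑ i ∈ Finset.range r, S i ω) ^ (-p) ∂μ) ^ (1 / p) := by
  classical
  have hs : 0 < s := lt_of_lt_of_le hr hrs
  set P := (Finset.range s).powersetCard r with hPdef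
  set C := Nat.choose s r with hCdef
  have hCpos : 0 < C := Nat.choose_pos hrs
  have hcard : P.card = C := by rw [hPdef, Finset.card_powersetCard, Finset.card_range]
  -- the key choose identity : s * choose (s-1) (r-1) = C * r
  have hkeyN : s * Nat.choose (s-1) (r-1) = C * r := by
    have h := Nat.add_one_mul_choose_eq (s-1) (r-1)
    have h1 : s - 1 + 1 = s := by omega
    have h2 : r - 1 + 1 = r := by omega
    simp only [Nat.succ_eq_add_one, h1, h2] at h
    rw [h, hCdef]
  have hkey : (s : ℝ) * (Nat.choose (s-1) (r-1) : ℝ) = (C : ℝ) * r := by exact_mod_cast hkeyN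
  set g : Finset ℕ → Ω → ℝ := fun B ω => ((r:ℝ)⁻¹ * ∑ i ∈ B, S i ω) ^ (-p) with hgdef
  have hposB : ∀ B ∈ P, ∀ ω, (0:ℝ) < (r:ℝ)⁻¹ * ∑ i ∈ B, S i ω := by
    intro B hB ω
    have hBc : B.card = r := (Finset.mem_powersetCard.1 hB).2
    have hBne : B.Nonempty := Finset.card_pos.1 (by omega)
    have hsum : 0 < ∑ i ∈ B, S i ω := Finset.sum_pos (fun i _ => hpos i ω) hBne
    positivity
  -- identical distribution of each g B with g (range r)
  have idB : ∀ B ∈ P, IdentDistrib (g B) (g (Finset.range r)) μ μ := by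
    intro B hB
    have hBc : B.card = r := (Finset.mem_powersetCard.1 hB).2
    have hsum := my_identDistrib_sum hmeas hindep hid r B (Finset.range r) hBc
      (Finset.card_range r)
    have hu : Measurable (fun x : ℝ => ((r:ℝ)⁻¹ * x) ^ (-p)) :=
      (measurable_id.const_mul _).pow measurable_const
    exact hsum.comp hu
  have hintr : Integrable (g (Finset.range r)) μ := hint
  have hintB : ∀ B ∈ P, Integrable (g B) μ := fun B hB => ((idB B hB).integrable_iff).2 hintr
  have hIB : ∀ B ∈ P, ∫ ω, g B ω ∂μ = ∫ ω, g (Finset.range r) ω ∂μ := fun B hB =>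
    (idB B hB).integral_eq
  -- pointwise Jensen
  have hpoint : ∀ ω, ((s:ℝ)⁻¹ * ∑ i ∈ Finset.range s, S i ω) ^ (-p)
      ≤ ∑ B ∈ P, (C:ℝ)⁻¹ * g B ω := by
    intro ω
    have havg : (s:ℝ)⁻¹ * ∑ i ∈ Finset.range s, S i ω
        = ∑ B ∈ P, (C:ℝ)⁻¹ • ((r:ℝ)⁻¹ * ∑ i ∈ B, S i ω) := by
      simp only [smul_eq_mul]
      rw [← Finset.mul_sum, ← Finset.mul_sum, my_double_count (fun i => S i ω) s r hr]
      have hsc : (s:ℝ)⁻¹ = (C:ℝ)⁻¹ * ((r:ℝ)⁻¹ * (Nat.choose (s-1) (r-1):ℝ)) := by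
        have hs0 : (s:ℝ) ≠ 0 := Nat.cast_ne_zero.2 (by omega)
        have hr0 : (r:ℝ) ≠ 0 := Nat.cast_ne_zero.2 (by omega)
        have hC0 : (C:ℝ) ≠ 0 := Nat.cast_ne_zero.2 (by omega)
        field_simp
        linarith [hkey]
      rw [hsc]; ring
    rw [havg]
    have hw1 : ∑ _B ∈ P, (C:ℝ)⁻¹ = 1 := by
      rw [Finset.sum_const, hcard, nsmul_eq_mul]
      field_simp
    have hj := (my_convexOn_rpow_neg hp).map_sum_le (t := P)
      (fun B _ => by positivity) hw1 (fun B hB => hposB B hB ω)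
    simpa [smul_eq_mul] using hj
  -- integrability
  have hmS : Measurable (fun ω => ((s:ℝ)⁻¹ * ∑ i ∈ Finset.range s, S i ω) ^ (-p)) :=
    ((Finset.measurable_sum _ fun i _ => hmeas i).const_mul _).pow measurable_const
  have hintG : Integrable (fun ω => ∑ B ∈ P, (C:ℝ)⁻¹ * g B ω) μ :=
    integrable_finset_sum _ fun B hB => (hintB B hB).const_mul _
  have hposS : ∀ ω, (0:ℝ) < (s:ℝ)⁻¹ * ∑ i ∈ Finset.range s, S i ω := by
    intro ω
    have hsum : 0 < ∑ i ∈ Finset.range s, S i ω :=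
      Finset.sum_pos (fun i _ => hpos i ω) (by simp [Finset.nonempty_range_iff]; omega)
    positivity
  have hintS : Integrable (fun ω => ((s:ℝ)⁻¹ * ∑ i ∈ Finset.range s, S i ω) ^ (-p)) μ := by
    refine hintG.mono' hmS.aestronglyMeasurable (Filter.Eventually.of_forall fun ω => ?_)
    rw [Real.norm_eq_abs, abs_of_nonneg (Real.rpow_nonneg (hposS ω).le _)]
    exact hpoint ω
  -- integral comparison
  have hle : ∫ ω, ((s:ℝ)⁻¹ * ∑ i ∈ Finset.range s, S i ω) ^ (-p) ∂μ
      ≤ ∫ ω, ((r:ℝ)⁻¹ * ∑ i ∈ Finset.range r, S i ω) ^ (-p) ∂μ := by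
    have h1 : ∫ ω, ((s:ℝ)⁻¹ * ∑ i ∈ Finset.range s, S i ω) ^ (-p) ∂μ
        ≤ ∫ ω, (∑ B ∈ P, (C:ℝ)⁻¹ * g B ω) ∂μ :=
      integral_mono hintS hintG hpoint
    have h2 : ∫ ω, (∑ B ∈ P, (C:ℝ)⁻¹ * g B ω) ∂μ
        = ∫ ω, g (Finset.range r) ω ∂μ := by
      rw [integral_finset_sum _ fun B hB => (hintB B hB).const_mul _]
      have : ∀ B ∈ P, ∫ ω, (C:ℝ)⁻¹ * g B ω ∂μ = (C:ℝ)⁻¹ * ∫ ω, g (Finset.range r) ω ∂μ := by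
        intro B hB
        rw [integral_const_mul, hIB B hB]
      rw [Finset.sum_congr rfl this, Finset.sum_const, hcard, nsmul_eq_mul]
      have hC0 : (C:ℝ) ≠ 0 := Nat.cast_ne_zero.2 (by omega)
      field_simp
    exact h1.trans_eq h2
  have hnn : 0 ≤ ∫ ω, ((s:ℝ)⁻¹ * ∑ i ∈ Finset.range s, S i ω) ^ (-p) ∂μ :=
    integral_nonneg fun ω => Real.rpow_nonneg (hposS ω).le _
  exact Real.rpow_le_rpow hnn hle (by positivity)
end

section
/- Let P satisfy PV ≤ δV + L with δ ∈ [0,1), L ≥ 1, and let P_R denote the restriction of P to B_R = {V ≤ R}, i.e., P_R(x,A) = P(x, A ∩ B_R) + 1_A(x) P(x, B_R^c). Let P̃ be a kernel with P̃(x, B_R) = 1 for all x, and suppose Δ(R) := sup_{x ∈ B_R} ‖P_R(x,·) − P̃(x,·)‖_tv / V(x) satisfies R·Δ(R) ≤ (1−δ)/2. Then P̃ satisfies P̃V(x) ≤ (δ + R·Δ(R)) V(x) + L for x ∈ B_R and P̃V(x) ≤ V(x) for x ∉ B_R. -/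
open MeasureTheory ProbabilityTheory

/-- The `V`-weighted distance `‖μ − ν‖_V = sup_{|f| ≤ V} |μ(f) − ν(f)|`. -/
noncomputable def vDist {G : Type*} [MeasurableSpace G] (V : G → ℝ) (μ ν : Measure G) : ℝ :=
  ⨆ f : {f : G → ℝ // Measurable f ∧ ∀ x, |f x| ≤ V x},
    |(∫ x, (f : G → ℝ) x ∂μ) - ∫ x, (f : G → ℝ) x ∂ν|

/-- The restriction `P_R(x,·) = P(x, · ∩ B) + P(x,Bᶜ) δ_x` of a kernel to a set `B`. -/
noncomputable def restrictKer {G : Type*} [MeasurableSpace G]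
    (P : Kernel G G) (B : Set G) (x : G) : Measure G :=
  (P x).restrict B + ((P x) Bᶜ) • Measure.dirac x

/-- if `PV ≤ δV + L`, `P̃(x,B_R) = 1` for all `x`, and
`‖P_R(x,·) − P̃(x,·)‖_tv ≤ Δ V(x)` on `B_R` with `RΔ ≤ (1−δ)/2`, then
`P̃V(x) ≤ (δ + RΔ) V(x) + L` on `B_R` and `P̃V(x) ≤ V(x)` off `B_R`. -/
theorem restricted_kernel_lyapunov {G : Type*} [MeasurableSpace G]
    (P Pt : Kernel G G) [IsMarkovKernel P] [IsMarkovKernel Pt]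
    (V : G → ℝ) (hVmeas : Measurable V) (hV : ∀ x, 1 ≤ V x)
    (δ L : ℝ) (hδ : δ ∈ Set.Ico (0 : ℝ) 1) (hL : 1 ≤ L)
    (hVint : ∀ x, Integrable V (P x)) (hVintT : ∀ x, Integrable V (Pt x))
    (hlyap : ∀ x, ∫ y, V y ∂(P x) ≤ δ * V x + L)
    (R : ℝ) (hR : 1 ≤ R)
    (hPt : ∀ x, (Pt x) {y | V y ≤ R} = 1)
    (Δ : ℝ) (hΔ0 : 0 ≤ Δ)
    (hΔ : ∀ x, V x ≤ R → vDist (fun _ => 1) (restrictKer P {y | V y ≤ R} x) (Pt x) ≤ Δ * V x)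
    (hRΔ : R * Δ ≤ (1 - δ) / 2) :
    (∀ x, V x ≤ R → ∫ y, V y ∂(Pt x) ≤ (δ + R * Δ) * V x + L) ∧
      (∀ x, ¬ V x ≤ R → ∫ y, V y ∂(Pt x) ≤ V x) := by
  classical
  set B : Set G := {y | V y ≤ R} with hBdef
  have hBm : MeasurableSet B := hVmeas measurableSet_Iic
  have hPtc : ∀ x, (Pt x) Bᶜ = 0 := by
    intro x
    have h := measure_compl hBm (measure_ne_top (Pt x) B)
    rw [show (Pt x) B = 1 from hPt x] at h
    simpa using h
  have haePt : ∀ x, ∀ᵐ y ∂(Pt x), V y ≤ R := by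
    intro x
    refine (ae_iff).2 ?_
    simpa [B, Set.compl_setOf] using hPtc x
  constructor
  · intro x hx
    have hR0 : (0:ℝ) < R := lt_of_lt_of_le one_pos hR
    -- the test function
    set f : G → ℝ := fun y => min (V y) R / R with hfdef
    have hfm : Measurable f := (hVmeas.min measurable_const).div_const R
    have hf1 : ∀ y, |f y| ≤ 1 := by
      intro y
      have h0 : (0:ℝ) ≤ min (V y) R := le_min (le_trans zero_le_one (hV y)) hR0.le
      have h1 : min (V y) R ≤ R := min_le_right _ _
      rw [abs_div, abs_of_nonneg h0, abs_of_pos hR0, div_le_one hR0]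
      exact h1
    -- restrictKer is a probability measure
    haveI hPR : IsProbabilityMeasure (restrictKer P B x) := by
      constructor
      simp [restrictKer, Measure.restrict_apply MeasurableSet.univ,
        Measure.dirac_apply' _ MeasurableSet.univ, measure_add_measure_compl hBm]
    -- integrals of f
    have hIt : ∫ y, f y ∂(Pt x) = (∫ y, V y ∂(Pt x)) / R := by
      rw [← integral_div]
      refine integral_congr_ae ?_
      filter_upwards [haePt x] with y hy
      simp [f, min_eq_left hy]
    have hVintR : Integrable V ((P x).restrict B) := (hVint x).restrict
    haveI : IsFiniteMeasure (((P x) Bᶜ) • (Measure.dirac x : Measure G)) := by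
      constructor
      simp only [Measure.smul_apply, smul_eq_mul]
      exact ENNReal.mul_lt_top (measure_lt_top _ _) (measure_lt_top _ _)
    have hfint : ∀ (μ : Measure G) [IsFiniteMeasure μ], Integrable f μ := by
      intro μ _
      refine (integrable_const (1:ℝ)).mono' hfm.aestronglyMeasurable ?_
      exact Filter.Eventually.of_forall fun y => by simpa [Real.norm_eq_abs] using hf1 y
    have hVdir0 : Integrable V (Measure.dirac x : Measure G) :=
      ⟨hVmeas.aestronglyMeasurable, by
        simp [HasFiniteIntegral, lintegral_dirac' _ hVmeas.enorm]⟩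
    have hVdir : Integrable V (((P x) Bᶜ) • (Measure.dirac x : Measure G)) :=
      hVdir0.smul_measure (measure_ne_top _ _)
    have hIr : ∫ y, f y ∂(restrictKer P B x)
        = ((∫ y in B, V y ∂(P x)) + ((P x) Bᶜ).toReal * V x) / R := by
      rw [restrictKer, integral_add_measure (hfint _) (hfint _),
        integral_smul_measure, integral_dirac' f x hfm.stronglyMeasurable]
      have h1 : ∫ y, f y ∂((P x).restrict B) = (∫ y in B, V y ∂(P x)) / R := by
        rw [← integral_div]
        refine integral_congr_ae ?_
        filter_upwards [ae_restrict_mem hBm] with y hy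
        simp [f, min_eq_left (by exact hy : V y ≤ R)]
      have h2 : f x = V x / R := by simp [f, min_eq_left hx]
      rw [h1, h2]
      rw [smul_eq_mul, add_div, mul_div_assoc]
    -- vDist bound
    have hbdd : BddAbove (Set.range fun g : {g : G → ℝ // Measurable g ∧ ∀ y, |g y| ≤ (fun _ => (1:ℝ)) y} =>
        |(∫ y, (g : G → ℝ) y ∂(restrictKer P B x)) - ∫ y, (g : G → ℝ) y ∂(Pt x)|) := by
      refine ⟨2, ?_⟩
      rintro r ⟨g, rfl⟩
      have hg1 : ∀ᵐ y ∂(restrictKer P B x), ‖(g : G → ℝ) y‖ ≤ 1 :=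
        Filter.Eventually.of_forall fun y => by simpa [Real.norm_eq_abs] using g.2.2 y
      have hg2 : ∀ᵐ y ∂(Pt x), ‖(g : G → ℝ) y‖ ≤ 1 :=
        Filter.Eventually.of_forall fun y => by simpa [Real.norm_eq_abs] using g.2.2 y
      have b1 := norm_integral_le_of_norm_le_const (μ := restrictKer P B x) hg1
      have b2 := norm_integral_le_of_norm_le_const (μ := Pt x) hg2
      simp only [probReal_univ, ENNReal.toReal_one, mul_one] at b1 b2
      calc |(∫ y, (g : G → ℝ) y ∂(restrictKer P B x)) - ∫ y, (g : G → ℝ) y ∂(Pt x)|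
          ≤ ‖∫ y, (g : G → ℝ) y ∂(restrictKer P B x)‖ + ‖∫ y, (g : G → ℝ) y ∂(Pt x)‖ :=
            abs_sub _ _
        _ ≤ 2 := by linarith
    have hkey : |(∫ y, f y ∂(restrictKer P B x)) - ∫ y, f y ∂(Pt x)| ≤ Δ * V x := by
      refine le_trans ?_ (hΔ x hx)
      exact le_ciSup hbdd (⟨f, hfm, hf1⟩ : {g : G → ℝ // Measurable g ∧ ∀ y, |g y| ≤ (fun _ => (1:ℝ)) y})
    -- combine
    have hdiff : ∫ y, V y ∂(Pt x) ≤ (∫ y in B, V y ∂(P x)) + ((P x) Bᶜ).toReal * V x + R * (Δ * V x) := by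
      have h := (abs_le.1 hkey).1
      rw [hIr, hIt] at h
      have h2 := mul_le_mul_of_nonneg_right
        (by linarith : (∫ y, V y ∂(Pt x)) / R ≤ ((∫ y in B, V y ∂(P x)) + ((P x) Bᶜ).toReal * V x) / R + Δ * V x) hR0.le
      rw [div_mul_cancel₀ _ hR0.ne', add_mul, div_mul_cancel₀ _ hR0.ne'] at h2
      linarith
    have hcompl : ((P x) Bᶜ).toReal * V x ≤ ∫ y in Bᶜ, V y ∂(P x) := by
      have hRint := setIntegral_ge_of_const_le_real (f := V) (μ := P x) hBm.compl (measure_ne_top _ _)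
        (fun y hy => le_of_lt (lt_of_not_ge hy)) ((hVint x).integrableOn)
      calc ((P x) Bᶜ).toReal * V x ≤ ((P x) Bᶜ).toReal * R := by
            exact mul_le_mul_of_nonneg_left hx ENNReal.toReal_nonneg
        _ = R * ((P x) Bᶜ).toReal := mul_comm _ _
        _ ≤ ∫ y in Bᶜ, V y ∂(P x) := hRint
    have hsplit : (∫ y in B, V y ∂(P x)) + ∫ y in Bᶜ, V y ∂(P x) = ∫ y, V y ∂(P x) :=
      integral_add_compl hBm (hVint x)
    have := hlyap x
    nlinarith [hdiff, hcompl, hsplit, this, mul_nonneg (mul_nonneg hΔ0 (le_trans zero_le_one (hV x))) hR0.le]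
  · intro x hx
    have h1 : ∫ y, V y ∂(Pt x) ≤ ∫ _, R ∂(Pt x) :=
      integral_mono_ae (hVintT x) (integrable_const R) (haePt x)
    simp only [integral_const, probReal_univ, ENNReal.toReal_one, one_smul, smul_eq_mul] at h1
    linarith [not_le.mp hx]
end

section
/- Under the setup of the MCwM algorithm for doubly-intractable targets: if W_N(x), W_N(z) are independent positive random variables with E[W_N(x)] = E[W_N(z)] = 1, s_N(x) := (E|W_N(x) − 1|²)^{1/2}, i_{2,N}(z) := (E[W_N(z)^{-2}])^{1/2}, a(x,z) := min{1, r(x,z)} and a_N(x,z) := E[min{1, r(x,z) W_N(x)/W_N(z)}] for a fixed real r(x,z) ≥ 0, then |a(x,z) − a_N(x,z)| ≤ a(x,z) · i_{2,N}(z) · (s_N(x) + s_N(z)). -/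
open MeasureTheory ProbabilityTheory

lemma min_abs_bound {r t : ℝ} (hr : 0 ≤ r) (ht : 0 < t) :
    |min 1 r - min 1 (r * t)| ≤ min 1 r * |1 - t| := by
  rcases le_or_gt r 1 with h1 | h1 <;> rcases le_or_gt (r * t) 1 with h2 | h2
  · rw [min_eq_right h1, min_eq_right h2, show r - r * t = r * (1 - t) by ring,
      abs_mul, abs_of_nonneg hr]
  · have hr0 : 0 < r := by nlinarith
    have ht1 : 1 < t := by nlinarith
    rw [min_eq_right h1, min_eq_left h2.le, abs_of_nonpos (by linarith),
      abs_of_nonpos (by linarith)]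
    nlinarith
  · have ht1 : t < 1 := by nlinarith
    rw [min_eq_left h1.le, min_eq_right h2, abs_of_nonneg (by nlinarith),
      abs_of_nonneg (by linarith)]
    nlinarith
  · rw [min_eq_left h1.le, min_eq_left h2.le]
    simp [mul_nonneg (le_min zero_le_one hr) (abs_nonneg _)]

lemma integral_abs_mul_le {Ω : Type*} [MeasurableSpace Ω] {μ : Measure Ω}
    {f g : Ω → ℝ} (hf : MemLp f 2 μ) (hg : MemLp g 2 μ) :
    ∫ ω, |f ω * g ω| ∂μ ≤ Real.sqrt (∫ ω, f ω ^ 2 ∂μ) * Real.sqrt (∫ ω, g ω ^ 2 ∂μ) := by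
  have hfa : MemLp (fun x => |f x|) 2 μ := by simpa [Real.norm_eq_abs] using hf.norm
  have hga : MemLp (fun x => |g x|) 2 μ := by simpa [Real.norm_eq_abs] using hg.norm
  have hpq : (2:ℝ).HolderConjugate 2 := by constructor <;> norm_num
  have h := integral_mul_le_Lp_mul_Lq_of_nonneg hpq
      (Filter.Eventually.of_forall fun ω => abs_nonneg (f ω))
      (Filter.Eventually.of_forall fun ω => abs_nonneg (g ω))
      (by simpa using hfa) (by simpa using hga)
  simp only [abs_mul]
  calc ∫ ω, |f ω| * |g ω| ∂μ ≤ _ := h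
    _ = Real.sqrt (∫ ω, f ω ^ 2 ∂μ) * Real.sqrt (∫ ω, g ω ^ 2 ∂μ) := by
        simp_rw [Real.rpow_two, sq_abs, ← Real.sqrt_eq_rpow]

lemma integrable_mul_of_memL2 {Ω : Type*} [MeasurableSpace Ω] {μ : Measure Ω}
    {f g : Ω → ℝ} (hf : MemLp f 2 μ) (hg : MemLp g 2 μ) :
    Integrable (fun ω => f ω * g ω) μ := by
  have h : MemLp (f • g) 1 μ := hg.smul hf (hpqr := ⟨by rw [inv_one]; exact ENNReal.inv_two_add_inv_two⟩)
  exact memLp_one_iff_integrable.1 h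

lemma sqrt_integral_add_sq_le {Ω : Type*} [MeasurableSpace Ω] {μ : Measure Ω}
    {f g : Ω → ℝ} (hf : MemLp f 2 μ) (hg : MemLp g 2 μ) :
    Real.sqrt (∫ ω, (f ω + g ω) ^ 2 ∂μ)
      ≤ Real.sqrt (∫ ω, f ω ^ 2 ∂μ) + Real.sqrt (∫ ω, g ω ^ 2 ∂μ) := by
  set A := ∫ ω, f ω ^ 2 ∂μ
  set B := ∫ ω, g ω ^ 2 ∂μ
  have hA : 0 ≤ A := integral_nonneg fun ω => sq_nonneg _
  have hB : 0 ≤ B := integral_nonneg fun ω => sq_nonneg _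
  have Ifg : Integrable (fun ω => f ω * g ω) μ := integrable_mul_of_memL2 hf hg
  have hCS : ∫ ω, f ω * g ω ∂μ ≤ Real.sqrt A * Real.sqrt B :=
    (integral_mono Ifg Ifg.abs fun ω => le_abs_self _).trans (integral_abs_mul_le hf hg)
  have expand : ∫ ω, (f ω + g ω) ^ 2 ∂μ = A + 2 * ∫ ω, f ω * g ω ∂μ + B := by
    have : ∀ ω, (f ω + g ω) ^ 2 = f ω ^ 2 + 2 * (f ω * g ω) + g ω ^ 2 := fun ω => by ring
    simp_rw [this]
    have i1 : Integrable (fun ω => f ω ^ 2 + 2 * (f ω * g ω)) μ :=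
      hf.integrable_sq.add (Ifg.const_mul 2)
    rw [integral_add i1 hg.integrable_sq,
      integral_add hf.integrable_sq (Ifg.const_mul 2), integral_const_mul]
  have h2 : ∫ ω, (f ω + g ω) ^ 2 ∂μ ≤ (Real.sqrt A + Real.sqrt B) ^ 2 := by
    rw [expand]
    nlinarith [Real.sq_sqrt hA, Real.sq_sqrt hB, Real.sqrt_nonneg A, Real.sqrt_nonneg B]
  calc Real.sqrt (∫ ω, (f ω + g ω) ^ 2 ∂μ) ≤ Real.sqrt ((Real.sqrt A + Real.sqrt B) ^ 2) :=
        Real.sqrt_le_sqrt h2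
    _ = _ := Real.sqrt_sq (by positivity)

/-- acceptance probability perturbation for MCwM: for independent positive
mean-one random variables `Wx, Wz` and a fixed acceptance ratio `r ≥ 0`, with
`a = min{1,r}` and `a_N = E[min{1, r Wx/Wz}]`, one has
`|a − a_N| ≤ a · (E[Wz⁻²])^{1/2} · ((E|Wx−1|²)^{1/2} + (E|Wz−1|²)^{1/2})`. -/
theorem mcwm_acceptance_error {Ω : Type*} [MeasurableSpace Ω]
    (μ : Measure Ω) [IsProbabilityMeasure μ]
    (Wx Wz : Ω → ℝ) (hmx : Measurable Wx) (hmz : Measurable Wz)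
    (hpx : ∀ ω, 0 < Wx ω) (hpz : ∀ ω, 0 < Wz ω)
    (hindep : IndepFun Wx Wz μ)
    (hintx : Integrable Wx μ) (hintz : Integrable Wz μ)
    (hmeanx : ∫ ω, Wx ω ∂μ = 1) (hmeanz : ∫ ω, Wz ω ∂μ = 1)
    (hsqx : Integrable (fun ω => (Wx ω - 1) ^ 2) μ)
    (hsqz : Integrable (fun ω => (Wz ω - 1) ^ 2) μ)
    (hinv : Integrable (fun ω => ((Wz ω)⁻¹) ^ 2) μ)
    (r : ℝ) (hr : 0 ≤ r)
    (hintmin : Integrable (fun ω => min 1 (r * Wx ω / Wz ω)) μ) :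
    |min 1 r - ∫ ω, min 1 (r * Wx ω / Wz ω) ∂μ|
      ≤ min 1 r * Real.sqrt (∫ ω, ((Wz ω)⁻¹) ^ 2 ∂μ)
          * (Real.sqrt (∫ ω, (Wx ω - 1) ^ 2 ∂μ) + Real.sqrt (∫ ω, (Wz ω - 1) ^ 2 ∂μ)) := by
  have ha : 0 ≤ min 1 r := le_min zero_le_one hr
  -- MemLp facts
  have hWx1 : MemLp (fun ω => Wx ω - 1) 2 μ :=
    (memLp_two_iff_integrable_sq ((hmx.sub measurable_const).aestronglyMeasurable)).2 hsqx
  have hWz1 : MemLp (fun ω => Wz ω - 1) 2 μ :=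
    (memLp_two_iff_integrable_sq ((hmz.sub measurable_const).aestronglyMeasurable)).2 hsqz
  have hWzinv : MemLp (fun ω => (Wz ω)⁻¹) 2 μ :=
    (memLp_two_iff_integrable_sq (hmz.inv.aestronglyMeasurable)).2 hinv
  have hdiff : MemLp (fun ω => Wx ω - Wz ω) 2 μ := by
    have h := hWx1.sub hWz1
    have : ((fun ω => Wx ω - 1) - fun ω => Wz ω - 1) = fun ω => Wx ω - Wz ω := by
      funext ω; show (Wx ω - 1) - (Wz ω - 1) = _; ring
    rwa [this] at h
  -- pointwise key inequality
  have key : ∀ ω, |min 1 r - min 1 (r * Wx ω / Wz ω)|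
      ≤ min 1 r * (|Wx ω - Wz ω| * (Wz ω)⁻¹) := by
    intro ω
    have ht : 0 < Wx ω / Wz ω := div_pos (hpx ω) (hpz ω)
    have h := min_abs_bound hr ht
    rw [mul_div_assoc]
    refine h.trans_eq ?_
    congr 1
    rw [show (1 : ℝ) - Wx ω / Wz ω = (Wz ω - Wx ω) / Wz ω by
        rw [sub_div, div_self (ne_of_gt (hpz ω))], abs_div, abs_of_pos (hpz ω), abs_sub_comm, div_eq_mul_inv]
  have Ig : Integrable (fun ω => (Wx ω - Wz ω) * (Wz ω)⁻¹) μ :=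
    integrable_mul_of_memL2 hdiff hWzinv
  have habs : ∀ ω, |(Wx ω - Wz ω) * (Wz ω)⁻¹| = |Wx ω - Wz ω| * (Wz ω)⁻¹ := fun ω => by
    rw [abs_mul, abs_of_pos (inv_pos.2 (hpz ω))]
  have Ibound : Integrable (fun ω => min 1 r * (|Wx ω - Wz ω| * (Wz ω)⁻¹)) μ := by
    refine (Ig.abs.const_mul (min 1 r)).congr
      (Filter.Eventually.of_forall fun ω => ?_)
    simp only [habs]
  have Iabs : Integrable (fun ω => |min 1 r - min 1 (r * Wx ω / Wz ω)|) μ :=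
    ((integrable_const (min 1 r)).sub hintmin).abs
  have hstep1 : |min 1 r - ∫ ω, min 1 (r * Wx ω / Wz ω) ∂μ|
      ≤ ∫ ω, |min 1 r - min 1 (r * Wx ω / Wz ω)| ∂μ := by
    rw [show min 1 r - ∫ ω, min 1 (r * Wx ω / Wz ω) ∂μ
        = ∫ ω, (min 1 r - min 1 (r * Wx ω / Wz ω)) ∂μ by
      rw [integral_sub (integrable_const _) hintmin, integral_const]; simp]
    simpa [Real.norm_eq_abs] using
      norm_integral_le_integral_norm (fun ω => min 1 r - min 1 (r * Wx ω / Wz ω)) (μ := μ)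
  have hstep2 : ∫ ω, |min 1 r - min 1 (r * Wx ω / Wz ω)| ∂μ
      ≤ min 1 r * ∫ ω, |Wx ω - Wz ω| * (Wz ω)⁻¹ ∂μ := by
    rw [← integral_const_mul]
    exact integral_mono Iabs Ibound key
  have hstep3 : ∫ ω, |Wx ω - Wz ω| * (Wz ω)⁻¹ ∂μ
      ≤ Real.sqrt (∫ ω, (Wx ω - Wz ω) ^ 2 ∂μ) * Real.sqrt (∫ ω, ((Wz ω)⁻¹) ^ 2 ∂μ) := by
    have h := integral_abs_mul_le hdiff hWzinv
    simpa [habs] using h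
  have hg : MemLp (fun ω => 1 - Wz ω) 2 μ := by
    have h := hWz1.neg
    have : (-fun ω => Wz ω - 1) = fun ω => 1 - Wz ω := by
      funext ω; show -(Wz ω - 1) = _; ring
    rwa [this] at h
  have hstep4 : Real.sqrt (∫ ω, (Wx ω - Wz ω) ^ 2 ∂μ)
      ≤ Real.sqrt (∫ ω, (Wx ω - 1) ^ 2 ∂μ) + Real.sqrt (∫ ω, (Wz ω - 1) ^ 2 ∂μ) := by
    have h := sqrt_integral_add_sq_le hWx1 hg
    have e1 : ∀ ω : Ω, (Wx ω - 1 + (1 - Wz ω)) ^ 2 = (Wx ω - Wz ω) ^ 2 := fun ω => by ring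
    have e2 : ∀ ω : Ω, (1 - Wz ω) ^ 2 = (Wz ω - 1) ^ 2 := fun ω => by ring
    simpa only [e1, e2] using h
  calc |min 1 r - ∫ ω, min 1 (r * Wx ω / Wz ω) ∂μ|
      ≤ min 1 r * ∫ ω, |Wx ω - Wz ω| * (Wz ω)⁻¹ ∂μ := hstep1.trans hstep2
    _ ≤ min 1 r * (Real.sqrt (∫ ω, (Wx ω - Wz ω) ^ 2 ∂μ)
          * Real.sqrt (∫ ω, ((Wz ω)⁻¹) ^ 2 ∂μ)) := mul_le_mul_of_nonneg_left hstep3 ha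
    _ ≤ min 1 r * ((Real.sqrt (∫ ω, (Wx ω - 1) ^ 2 ∂μ)
          + Real.sqrt (∫ ω, (Wz ω - 1) ^ 2 ∂μ)) * Real.sqrt (∫ ω, ((Wz ω)⁻¹) ^ 2 ∂μ)) :=
        mul_le_mul_of_nonneg_left
          (mul_le_mul_of_nonneg_right hstep4 (Real.sqrt_nonneg _)) ha
    _ = _ := by ring
end
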